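/- Fix a finite type σ over Ω, countable ordinals ζ and ζ', families (f_ξ)_{ξ<ζ} ⊆ Ω_σ and (f'_ξ)_{ξ<ζ'} ⊆ Ω_σ, and a map q : ζ → ζ'. If f_ξ ≤hp f'_{q(ξ)} for all ξ < ζ, then limsup_{ξ→ζ} f_ξ ≤hp limsup_{ξ→ζ} f'_{q(ξ)}. In particular, if f_ξ ≤hp f for all ξ < ζ, then limsup_{ξ→ζ} f_ξ ≤hp f. -/

import Mathlib

/-!  Framework: finite type structure over Ω = countable ordinals,
     limsup/liminf, transfinite iteration functionals, hereditarily
     positive and hereditarily monotone functionals. -/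

noncomputable section
namespace IterOrd

open Ordinal

theorem omega1_pos : (0 : Ordinal) < ω₁ := Ordinal.omega0_pos.trans Ordinal.omega0_lt_omega_one

/-- `Om` is Ω, the set of countable ordinals (ordinals `< ω₁`). -/
abbrev Om : Type 1 := {o : Ordinal // o < ω₁}

/-- Infimum of a subset of Ω (the minimum for nonempty sets; `0` for `∅`). -/
def infOm (s : Set Om) : Om :=
  ⟨sInf (Subtype.val '' s), by
    rcases (Subtype.val '' s).eq_empty_or_nonempty with h | h
    · rw [h]; simpa using omega1_pos
    · obtain ⟨x, _, he⟩ := csInf_mem h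
      exact he ▸ x.2⟩

/-- Supremum of a subset of Ω.  Whenever the supremum of the set exists in Ω
(in particular for every countable subset, by regularity of `ω₁`) this is the
genuine supremum; otherwise it takes a junk value. -/
def supOm (s : Set Om) : Om :=
  if h : sSup (Subtype.val '' s) < ω₁ then ⟨sSup (Subtype.val '' s), h⟩ else ⟨0, omega1_pos⟩

/-- Finite types over the base type `o` (interpreted as Ω). -/
inductive Ty : Type
  | base : Ty
  | arrow : Ty → Ty → Ty
deriving DecidableEq

/-- The full type structure over Ω: `El base = Ω` and
`El (arrow σ τ)` is the set of all functions `El σ → El τ`. -/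
@[reducible] def El : Ty → Type 1
  | .base => Om
  | .arrow σ τ => El σ → El τ

/-- The order on each `El σ`: the ordinal order at base type, pointwise at arrow types. -/
def Le : (σ : Ty) → El σ → El σ → Prop
  | .base => fun x y => x ≤ y
  | .arrow σ τ => fun f g => ∀ x : El σ, Le τ (f x) (g x)

/-- Suprema, computed pointwise at function types. -/
def supEl : (σ : Ty) → Set (El σ) → El σ
  | .base => supOm
  | .arrow σ τ => fun S (x : El σ) => supEl τ ((fun f : El (.arrow σ τ) => f x) '' S)

/-- Infima, computed pointwise at function types. -/
def infEl : (σ : Ty) → Set (El σ) → El σ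
  | .base => infOm
  | .arrow σ τ => fun S (x : El σ) => infEl τ ((fun f : El (.arrow σ τ) => f x) '' S)

/-- `limsup_{ξ→ζ} f ξ = inf_{γ<ζ} sup_{γ≤ξ<ζ} f ξ`. -/
def limsupEl (σ : Ty) (ζ : Ordinal) (f : ∀ ξ : Ordinal, ξ < ζ → El σ) : El σ :=
  infEl σ {y | ∃ γ, ∃ _ : γ < ζ, y = supEl σ {z | ∃ ξ, ∃ h : ξ < ζ, γ ≤ ξ ∧ z = f ξ h}}

/-- `liminf_{ξ→ζ} f ξ = sup_{γ<ζ} inf_{γ≤ξ<ζ} f ξ`. -/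
def liminfEl (σ : Ty) (ζ : Ordinal) (f : ∀ ξ : Ordinal, ξ < ζ → El σ) : El σ :=
  supEl σ {y | ∃ γ, ∃ _ : γ < ζ, y = infEl σ {z | ∃ ξ, ∃ h : ξ < ζ, γ ≤ ξ ∧ z = f ξ h}}

/-- `limsup` of a ζ-indexed sequence of ordinals. -/
def oLimsup (ζ : Ordinal) (a : Ordinal → Ordinal) : Ordinal :=
  sInf {s | ∃ γ, γ < ζ ∧ s = sSup (a '' {ξ | γ ≤ ξ ∧ ξ < ζ})}

/-- `liminf` of a ζ-indexed sequence of ordinals. -/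
def oLiminf (ζ : Ordinal) (a : Ordinal → Ordinal) : Ordinal :=
  sSup {s | ∃ γ, γ < ζ ∧ s = sInf (a '' {ξ | γ ≤ ξ ∧ ξ < ζ})}

/-- The α-iteration functional of type σ:
`Iter 0 f x = x`, `Iter (α+1) f x = f (Iter α f x)`, and
`Iter μ f x = limsup_{ξ→μ} Iter ξ f x` for limit μ. -/
def Iter (σ : Ty) (α : Ordinal) : (El σ → El σ) → El σ → El σ :=
  Ordinal.limitRecOn (motive := fun _ => (El σ → El σ) → El σ → El σ) α
    (fun _ x => x)
    (fun _ ih f x => f (ih f x))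
    (fun μ _ ih f x => limsupEl σ μ (fun ξ h => ih ξ h f x))

/-- The pair (hereditarily positive, ≤hp), defined simultaneously by recursion on the type.
Every element of `Ω` and of `Ω_{ρ→τ}` with `ρ ≠ τ` is h.p., and `≤hp` there is `≤`;
`f : Ω_{τ→τ}` is h.p. iff it preserves h.p., is inflationary on h.p. arguments and is
monotone (w.r.t. `≤hp`) on h.p. arguments; `f ≤hp f'` on `Ω_{τ→τ}` iff `f x ≤hp f' x`
for every h.p. `x`. -/
def HPaux : (σ : Ty) → (El σ → Prop) × (El σ → El σ → Prop)
  | .base => ⟨fun _ => True, fun x y => x ≤ y⟩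
  | .arrow ρ τ =>
      ⟨fun f =>
        if h : ρ = τ then
          (∀ x, (HPaux ρ).1 x → (HPaux τ).1 (f x)) ∧
          (∀ x, (HPaux ρ).1 x → (HPaux τ).2 (cast (congrArg El h) x) (f x)) ∧
          (∀ x y, (HPaux ρ).1 x → (HPaux ρ).1 y → (HPaux ρ).2 x y → (HPaux τ).2 (f x) (f y))
        else True,
       fun f g =>
        if ρ = τ then ∀ x, (HPaux ρ).1 x → (HPaux τ).2 (f x) (g x)
        else Le (.arrow ρ τ) f g⟩

/-- Hereditarily positive functionals. -/
def Hp (σ : Ty) : El σ → Prop := (HPaux σ).1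

/-- The order `≤hp`. -/
def HpLe (σ : Ty) : El σ → El σ → Prop := (HPaux σ).2

/-- `f =hp g` iff `f ≤hp g` and `g ≤hp f`. -/
def HpEq (σ : Ty) (f g : El σ) : Prop := HpLe σ f g ∧ HpLe σ g f

/-- The pair (hereditarily monotone, ≤ on the hereditarily monotone structure),
by recursion on the type.  `f` is hereditarily monotone iff it maps hereditarily
monotone arguments to hereditarily monotone values, monotonically; the order is
pointwise over hereditarily monotone arguments (i.e. the order of `Ω^mon`). -/
def HMaux : (σ : Ty) → (El σ → Prop) × (El σ → El σ → Prop)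
  | .base => ⟨fun _ => True, fun x y => x ≤ y⟩
  | .arrow σ τ =>
      ⟨fun f =>
        (∀ x, (HMaux σ).1 x → (HMaux τ).1 (f x)) ∧
        (∀ x y, (HMaux σ).1 x → (HMaux σ).1 y → (HMaux σ).2 x y → (HMaux τ).2 (f x) (f y)),
       fun f g => ∀ x, (HMaux σ).1 x → (HMaux τ).2 (f x) (g x)⟩

/-- Hereditarily monotone functionals: the members of the type structure `Ω^mon`. -/
def HM (σ : Ty) : El σ → Prop := (HMaux σ).1

/-- The (pointwise) order of the hereditarily monotone type structure `Ω^mon`. -/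
def LeHM (σ : Ty) : El σ → El σ → Prop := (HMaux σ).2

/-- Equality in the hereditarily monotone type structure `Ω^mon`. -/
def EqHM (σ : Ty) (f g : El σ) : Prop := LeHM σ f g ∧ LeHM σ g f

/-! ### Auxiliary lemmas -/

lemma sSup_lt_omega1 {s : Set Ordinal} (hs : s.Countable) (h : ∀ a ∈ s, a < ω₁) :
    sSup s < ω₁ := by
  rcases s.eq_empty_or_nonempty with rfl | hne
  · simpa using omega1_pos
  · obtain ⟨g, rfl⟩ := hs.exists_eq_range hne
    have : iSup g < (Cardinal.aleph 1).ord :=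
      by rw [Cardinal.ord_aleph]; exact Ordinal.iSup_lt_omega_one (f := g) (fun n => by
        simpa [Cardinal.ord_aleph] using h (g n) ⟨n, rfl⟩)
    simpa [Cardinal.ord_aleph, iSup] using this

/-- the value-image of a family indexed below a countable ordinal is countable -/
lemma countable_fam {ζ : Ordinal} (hζ : ζ < ω₁) (F : Ordinal → Ordinal) :
    (F '' Set.Iio ζ).Countable := by
  apply Set.Countable.image
  rw [Cardinal.countable_iff_lt_aleph_one]
  have h1 : ζ.card < Cardinal.aleph 1 := by
    rwa [← Cardinal.lt_ord, Cardinal.ord_aleph]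
  calc Cardinal.mk (Set.Iio ζ) = Cardinal.lift.{_ + 1} ζ.card := Ordinal.mk_Iio_ordinal ζ
    _ < Cardinal.lift.{_ + 1} (Cardinal.aleph 1) := Cardinal.lift_lt.2 h1
    _ = Cardinal.aleph 1 := by rw [Cardinal.lift_aleph, Ordinal.lift_one]

lemma le_supOm {s : Set Om} (hs : (Subtype.val '' s).Countable) {a : Om} (ha : a ∈ s) :
    a ≤ supOm s := by
  have hlt : sSup (Subtype.val '' s) < ω₁ :=
    sSup_lt_omega1 hs (by rintro b ⟨x, -, rfl⟩; exact x.2)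
  rw [supOm, dif_pos hlt]
  show a.1 ≤ sSup (Subtype.val '' s)
  exact le_csSup ⟨ω₁, by rintro b ⟨x, -, rfl⟩; exact x.2.le⟩ ⟨a, ha, rfl⟩

lemma supOm_le {s : Set Om} {b : Om} (h : ∀ a ∈ s, a ≤ b) : supOm s ≤ b := by
  rw [supOm]
  split_ifs with hlt
  · show sSup (Subtype.val '' s) ≤ b.1
    exact csSup_le' (by rintro c ⟨x, hx, rfl⟩; exact h x hx)
  · show (0 : Ordinal) ≤ b.1
    exact zero_le

lemma supOm_mono {s t : Set Om} (ht : (Subtype.val '' t).Countable)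
    (h : ∀ a ∈ s, ∃ b ∈ t, a ≤ b) : supOm s ≤ supOm t :=
  supOm_le fun a ha => by
    obtain ⟨b, hb, hab⟩ := h a ha
    exact hab.trans (le_supOm ht hb)

lemma infOm_le {s : Set Om} {a : Om} (ha : a ∈ s) : infOm s ≤ a :=
  show sInf (Subtype.val '' s) ≤ a.1 from csInf_le' ⟨a, ha, rfl⟩

lemma infOm_mono {s t : Set Om} (hne : t = ∅ → s = ∅)
    (h : ∀ b ∈ t, ∃ a ∈ s, a ≤ b) : infOm s ≤ infOm t := by
  rcases t.eq_empty_or_nonempty with rfl | htne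
  · rw [hne rfl]
  · have h1 : (Subtype.val '' t).Nonempty := htne.image _
    obtain ⟨b, hb, hbe⟩ := csInf_mem h1
    obtain ⟨a, ha, hab⟩ := h b hb
    show sInf (Subtype.val '' s) ≤ sInf (Subtype.val '' t)
    rw [← hbe]
    exact le_trans (csInf_le' ⟨a, ha, rfl⟩) hab

/-- evaluation commutes with `supEl` at arrow types -/
lemma supEl_arrow_apply (ρ τ : Ty) (S : Set (El (.arrow ρ τ))) (x : El ρ) :
    supEl (.arrow ρ τ) S x = supEl τ ((fun g : El (.arrow ρ τ) => g x) '' S) := rfl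

lemma infEl_arrow_apply (ρ τ : Ty) (S : Set (El (.arrow ρ τ))) (x : El ρ) :
    infEl (.arrow ρ τ) S x = infEl τ ((fun g : El (.arrow ρ τ) => g x) '' S) := rfl

lemma tail_image (ρ τ : Ty) (ζ γ : Ordinal) (f : ∀ ξ : Ordinal, ξ < ζ → El (.arrow ρ τ))
    (x : El ρ) :
    ((fun g : El (.arrow ρ τ) => g x) '' {z | ∃ ξ, ∃ h : ξ < ζ, γ ≤ ξ ∧ z = f ξ h}) =
      {z | ∃ ξ, ∃ h : ξ < ζ, γ ≤ ξ ∧ z = f ξ h x} := by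
  ext z
  simp only [Set.mem_image, Set.mem_setOf_eq]
  constructor
  · rintro ⟨w, ⟨ξ, hξ, hγξ, rfl⟩, rfl⟩
    exact ⟨ξ, hξ, hγξ, rfl⟩
  · rintro ⟨ξ, hξ, hγξ, rfl⟩
    exact ⟨f ξ hξ, ⟨ξ, hξ, hγξ, rfl⟩, rfl⟩

/-- evaluation commutes with `limsupEl` at arrow types -/
lemma limsupEl_arrow_apply (ρ τ : Ty) (ζ : Ordinal)
    (f : ∀ ξ : Ordinal, ξ < ζ → El (.arrow ρ τ)) (x : El ρ) :
    limsupEl (.arrow ρ τ) ζ f x = limsupEl τ ζ (fun ξ h => f ξ h x) := by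
  rw [limsupEl, limsupEl, infEl_arrow_apply]
  congr 1
  ext y
  simp only [Set.mem_image, Set.mem_setOf_eq]
  constructor
  · rintro ⟨g, ⟨γ, hγ, rfl⟩, rfl⟩
    exact ⟨γ, hγ, by rw [supEl_arrow_apply, tail_image]⟩
  · rintro ⟨γ, hγ, rfl⟩
    exact ⟨supEl (.arrow ρ τ) {z | ∃ ξ, ∃ h : ξ < ζ, γ ≤ ξ ∧ z = f ξ h}, ⟨γ, hγ, rfl⟩,
      by rw [supEl_arrow_apply, tail_image]⟩

/-- the value-image of the "tail set" of a base-type family is countable -/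
lemma countable_tail {ζ : Ordinal} (hζ : ζ < ω₁) (γ : Ordinal)
    (f : ∀ ξ : Ordinal, ξ < ζ → El .base) :
    (Subtype.val '' {z : Om | ∃ ξ, ∃ h : ξ < ζ, γ ≤ ξ ∧ z = f ξ h}).Countable := by
  classical
  set F : Ordinal → Ordinal := fun ξ => if h : ξ < ζ then (f ξ h).1 else 0 with hF
  apply (countable_fam hζ F).mono
  rintro b ⟨z, ⟨ξ, hξ, hγξ, rfl⟩, rfl⟩
  exact ⟨ξ, hξ, by simp [hF, hξ]⟩

/-- the `Le` version at base type, monotonicity -/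
lemma leA_base {ζ : Ordinal} (hζ : ζ < ω₁) (f g : ∀ ξ : Ordinal, ξ < ζ → El .base)
    (hfg : ∀ ξ (hξ : ξ < ζ), Le .base (f ξ hξ) (g ξ hξ)) :
    Le .base (limsupEl .base ζ f) (limsupEl .base ζ g) := by
  show limsupEl .base ζ f ≤ limsupEl .base ζ g
  rw [limsupEl, limsupEl]
  show infEl .base _ ≤ infEl .base _
  apply infOm_mono
  · intro ht
    ext y
    simp only [Set.mem_empty_iff_false, iff_false, Set.mem_setOf_eq]
    rintro ⟨γ, hγ, rfl⟩
    have : supOm {z : Om | ∃ ξ, ∃ h : ξ < ζ, γ ≤ ξ ∧ z = g ξ h} ∈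
        {y | ∃ γ, ∃ _ : γ < ζ, y = supEl .base {z | ∃ ξ, ∃ h : ξ < ζ, γ ≤ ξ ∧ z = g ξ h}} :=
      ⟨γ, hγ, rfl⟩
    rw [ht] at this
    exact this
  · rintro b ⟨γ, hγ, rfl⟩
    refine ⟨supEl .base {z | ∃ ξ, ∃ h : ξ < ζ, γ ≤ ξ ∧ z = f ξ h}, ⟨γ, hγ, rfl⟩, ?_⟩
    apply supOm_mono (countable_tail hζ γ g)
    rintro a ⟨ξ, hξ, hγξ, rfl⟩
    exact ⟨g ξ hξ, ⟨ξ, hξ, hγξ, rfl⟩, hfg ξ hξ⟩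

/-- the `Le` version at base type, upper bounds -/
lemma leB_base {ζ : Ordinal} (hζ : ζ < ω₁) (f : ∀ ξ : Ordinal, ξ < ζ → El .base)
    (g : El .base) (hfg : ∀ ξ (hξ : ξ < ζ), Le .base (f ξ hξ) g) :
    Le .base (limsupEl .base ζ f) g := by
  show limsupEl .base ζ f ≤ g
  rw [limsupEl]
  show infOm {y | ∃ γ, ∃ _ : γ < ζ, y = supEl .base {z | ∃ ξ, ∃ h : ξ < ζ, γ ≤ ξ ∧ z = f ξ h}} ≤ g
  rcases eq_or_ne ζ 0 with rfl | hζ0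
  · have he : {y : Om | ∃ γ, ∃ _ : γ < (0 : Ordinal),
        y = supEl .base {z | ∃ ξ, ∃ h : ξ < (0 : Ordinal), γ ≤ ξ ∧ z = f ξ h}} = ∅ := by
      ext y
      simp only [Set.mem_empty_iff_false, iff_false, Set.mem_setOf_eq]
      rintro ⟨γ, hγ, -⟩
      exact absurd hγ not_lt_zero
    rw [he]
    show sInf (Subtype.val '' (∅ : Set Om)) ≤ g.1
    rw [Set.image_empty, Ordinal.sInf_empty]
    exact zero_le
  · have h0 : (0 : Ordinal) < ζ := pos_iff_ne_zero.2 hζ0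
    refine le_trans (infOm_le (a := supEl .base {z | ∃ ξ, ∃ h : ξ < ζ, (0 : Ordinal) ≤ ξ ∧ z = f ξ h}) ⟨0, h0, rfl⟩) ?_
    exact supOm_le (by rintro a ⟨ξ, hξ, -, rfl⟩; exact hfg ξ hξ)

universe u

/-- the `Le` versions at every type -/
lemma le_limsup (σ : Ty) :
    (∀ (ζ : Ordinal.{u}), ζ < ω₁ → ∀ (f g : ∀ ξ : Ordinal, ξ < ζ → El σ),
      (∀ ξ (hξ : ξ < ζ), Le σ (f ξ hξ) (g ξ hξ)) →
        Le σ (limsupEl σ ζ f) (limsupEl σ ζ g)) ∧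
    (∀ (ζ : Ordinal.{u}), ζ < ω₁ → ∀ (f : ∀ ξ : Ordinal, ξ < ζ → El σ) (g : El σ),
      (∀ ξ (hξ : ξ < ζ), Le σ (f ξ hξ) g) → Le σ (limsupEl σ ζ f) g) := by
  induction σ with
  | base => exact ⟨fun ζ hζ f g h => leA_base hζ f g h, fun ζ hζ f g h => leB_base hζ f g h⟩
  | arrow ρ τ ihρ ihτ =>
    constructor
    · intro ζ hζ f g h x
      rw [limsupEl_arrow_apply, limsupEl_arrow_apply]
      exact ihτ.1 ζ hζ _ _ (fun ξ hξ => h ξ hξ x)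
    · intro ζ hζ f g h x
      rw [limsupEl_arrow_apply]
      exact ihτ.2 ζ hζ _ _ (fun ξ hξ => h ξ hξ x)

lemma hpLe_arrow_self {τ : Ty} {a b : El (.arrow τ τ)} :
    HpLe (.arrow τ τ) a b ↔ ∀ x, Hp τ x → HpLe τ (a x) (b x) := by
  show (HPaux (.arrow τ τ)).2 a b ↔ _
  rw [HPaux]
  simp [Hp, HpLe]

lemma hpLe_arrow_ne {ρ τ : Ty} (h : ρ ≠ τ) {a b : El (.arrow ρ τ)} :
    HpLe (.arrow ρ τ) a b ↔ Le (.arrow ρ τ) a b := by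
  show (HPaux (.arrow ρ τ)).2 a b ↔ _
  rw [HPaux]
  simp [h]

/-- the `HpLe` versions at every type -/
lemma hpLe_limsup (σ : Ty) :
    (∀ (ζ : Ordinal.{u}), ζ < ω₁ → ∀ (f g : ∀ ξ : Ordinal, ξ < ζ → El σ),
      (∀ ξ (hξ : ξ < ζ), HpLe σ (f ξ hξ) (g ξ hξ)) →
        HpLe σ (limsupEl σ ζ f) (limsupEl σ ζ g)) ∧
    (∀ (ζ : Ordinal.{u}), ζ < ω₁ → ∀ (f : ∀ ξ : Ordinal, ξ < ζ → El σ) (g : El σ),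
      (∀ ξ (hξ : ξ < ζ), HpLe σ (f ξ hξ) g) → HpLe σ (limsupEl σ ζ f) g) := by
  induction σ with
  | base => exact ⟨fun ζ hζ f g h => leA_base hζ f g h, fun ζ hζ f g h => leB_base hζ f g h⟩
  | arrow ρ τ ihρ ihτ =>
    rcases eq_or_ne ρ τ with rfl | hne
    · constructor
      · intro ζ hζ f g h
        rw [hpLe_arrow_self]
        intro x hx
        rw [limsupEl_arrow_apply, limsupEl_arrow_apply]
        exact ihτ.1 ζ hζ _ _ (fun ξ hξ => (hpLe_arrow_self.1 (h ξ hξ)) x hx)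
      · intro ζ hζ f g h
        rw [hpLe_arrow_self]
        intro x hx
        rw [limsupEl_arrow_apply]
        exact ihτ.2 ζ hζ _ _ (fun ξ hξ => (hpLe_arrow_self.1 (h ξ hξ)) x hx)
    · constructor
      · intro ζ hζ f g h
        rw [hpLe_arrow_ne hne]
        exact (le_limsup (.arrow ρ τ)).1 ζ hζ _ _
          (fun ξ hξ => (hpLe_arrow_ne hne).1 (h ξ hξ))
      · intro ζ hζ f g h
        rw [hpLe_arrow_ne hne]
        exact (le_limsup (.arrow ρ τ)).2 ζ hζ _ _
          (fun ξ hξ => (hpLe_arrow_ne hne).1 (h ξ hξ))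

/-- If `q : ζ → ζ'` and `f_ξ ≤hp f'_{q(ξ)}` for all `ξ < ζ`, then
`limsup_{ξ→ζ} f_ξ ≤hp limsup_{ξ→ζ} f'_{q(ξ)}`; in particular, if `f_ξ ≤hp f` for all
`ξ < ζ`, then `limsup_{ξ→ζ} f_ξ ≤hp f`. -/
theorem limsup_hpLe_limsup (σ : Ty) (ζ ζ' : Ordinal) (hζ : ζ < ω₁) (hζ' : ζ' < ω₁)
    (f : ∀ ξ : Ordinal, ξ < ζ → El σ) (f' : ∀ ξ : Ordinal, ξ < ζ' → El σ)
    (q : Ordinal → Ordinal) (hq : ∀ ξ, ξ < ζ → q ξ < ζ') :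
    ((∀ ξ (hξ : ξ < ζ), HpLe σ (f ξ hξ) (f' (q ξ) (hq ξ hξ))) →
      HpLe σ (limsupEl σ ζ f) (limsupEl σ ζ (fun ξ hξ => f' (q ξ) (hq ξ hξ)))) ∧
    (∀ g : El σ, (∀ ξ (hξ : ξ < ζ), HpLe σ (f ξ hξ) g) →
      HpLe σ (limsupEl σ ζ f) g) := by
  refine ⟨fun h => (hpLe_limsup σ).1 ζ hζ f _ h, fun g h => (hpLe_limsup σ).2 ζ hζ f g h⟩

end IterOrd
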